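/- Let E, M be classes of morphisms in a V-category B that is tensored and cotensored. Then the following are equivalent: (1) (E,M) is a V-prefactorization system on B; (2) (E,M) is an ordinary prefactorization system on B, E is closed under tensors, and M is closed under cotensors. -/

import Mathlib

open CategoryTheory CategoryTheory.Limits CategoryTheory.MonoidalCategory

universe w v₁ v₂ v₃ v₄ u₁ u₂ u₃ u₄

namespace EnrichedFS

variable (V : Type u₁) [Category.{v₁} V] [MonoidalCategory V] [SymmetricCategory V]
  [MonoidalClosed V]
variable (B : Type u₂) [Category.{v₂} B] [EnrichedOrdinaryCategory V B]

/-- `e` is `V`-orthogonal to `m`: the square of hom-objects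
with top `B(A₂,m)`, left `B(e,X₁)`, right `B(e,X₂)`, bottom `B(A₁,m)`
is a pullback in `V`. -/
def VOrth {A₁ A₂ X₁ X₂ : B} (e : A₁ ⟶ A₂) (m : X₁ ⟶ X₂) : Prop :=
  IsPullback (eHomWhiskerLeft V A₂ m) (eHomWhiskerRight V e X₁)
    (eHomWhiskerRight V e X₂) (eHomWhiskerLeft V A₁ m)

/-- `H^{↓V}`: the class of morphisms to which every member of `H` is `V`-orthogonal. -/
def vRlp (H : MorphismProperty B) : MorphismProperty B :=
  fun _ _ m => ∀ ⦃A₁ A₂ : B⦄ (e : A₁ ⟶ A₂), H e → VOrth V B e m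

/-- `M^{↑V}`: the class of morphisms which are `V`-orthogonal to every member of `M`. -/
def vLlp (M : MorphismProperty B) : MorphismProperty B :=
  fun _ _ e => ∀ ⦃X₁ X₂ : B⦄ (m : X₁ ⟶ X₂), M m → VOrth V B e m

/-- ordinary orthogonality: unique diagonal fillers for every commutative square. -/
def OrdOrth {A₁ A₂ X₁ X₂ : B} (e : A₁ ⟶ A₂) (m : X₁ ⟶ X₂) : Prop :=
  ∀ (u : A₁ ⟶ X₁) (v : A₂ ⟶ X₂), u ≫ m = e ≫ v →
    ∃! d : A₂ ⟶ X₁, e ≫ d = u ∧ d ≫ m = v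

/-- `H^{↓}` (ordinary). -/
def ordRlp (H : MorphismProperty B) : MorphismProperty B :=
  fun _ _ m => ∀ ⦃A₁ A₂ : B⦄ (e : A₁ ⟶ A₂), H e → OrdOrth B e m

/-- `M^{↑}` (ordinary). -/
def ordLlp (M : MorphismProperty B) : MorphismProperty B :=
  fun _ _ e => ∀ ⦃X₁ X₂ : B⦄ (m : X₁ ⟶ X₂), M m → OrdOrth B e m

/-- `(E,M)` is a `V`-prefactorization system: `E^{↓V} = M` and `M^{↑V} = E`. -/
def IsVPrefactorization (E M : MorphismProperty B) : Prop :=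
  vRlp V B E = M ∧ vLlp V B M = E

/-- `(E,M)` is an ordinary prefactorization system. -/
def IsOrdPrefactorization (E M : MorphismProperty B) : Prop :=
  ordRlp B E = M ∧ ordLlp B M = E

/-- every morphism factors as a morphism in `E` followed by a morphism in `M`. -/
def FactorizationsExist (E M : MorphismProperty B) : Prop :=
  ∀ ⦃X Y : B⦄ (f : X ⟶ Y), ∃ (Z : B) (e : X ⟶ Z) (m : Z ⟶ Y), E e ∧ M m ∧ e ≫ m = f

/-- `(E,M)` is a `V`-factorization system. -/
def IsVFactorizationSystem (E M : MorphismProperty B) : Prop :=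
  IsVPrefactorization V B E M ∧ FactorizationsExist B E M

/-- `(E,M)` is an ordinary factorization system. -/
def IsOrdFactorizationSystem (E M : MorphismProperty B) : Prop :=
  IsOrdPrefactorization B E M ∧ FactorizationsExist B E M

/-- intersection of two classes of morphisms. -/
def interProp (M N : MorphismProperty B) : MorphismProperty B := fun _ _ f => M f ∧ N f

/-- `V`-monomorphisms. -/
def vMono : MorphismProperty B := fun _ _ m => ∀ A : B, Mono (eHomWhiskerLeft V A m)

/-- `V`-epimorphisms. -/
def vEpi : MorphismProperty B := fun _ _ e => ∀ A : B, Mono (eHomWhiskerRight V e A)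

/-- `V`-strong monomorphisms. -/
def vStrongMono : MorphismProperty B := fun _ _ m =>
  vMono V B m ∧ ∀ ⦃A₁ A₂ : B⦄ (e : A₁ ⟶ A₂), vEpi V B e → VOrth V B e m

/-- `V`-strong epimorphisms. -/
def vStrongEpi : MorphismProperty B := fun _ _ e =>
  vEpi V B e ∧ ∀ ⦃X₁ X₂ : B⦄ (m : X₁ ⟶ X₂), vMono V B m → VOrth V B e m

/-- ordinary monomorphisms, as a class. -/
def ordMono : MorphismProperty B := fun _ _ m => Mono m

/-- ordinary epimorphisms, as a class. -/
def ordEpi : MorphismProperty B := fun _ _ e => Epi e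

/-- ordinary strong monomorphisms. -/
def ordStrongMono : MorphismProperty B := fun _ _ m =>
  Mono m ∧ ∀ ⦃A₁ A₂ : B⦄ (e : A₁ ⟶ A₂), Epi e → OrdOrth B e m

/-- ordinary strong epimorphisms. -/
def ordStrongEpi : MorphismProperty B := fun _ _ e =>
  Epi e ∧ ∀ ⦃X₁ X₂ : B⦄ (m : X₁ ⟶ X₂), Mono m → OrdOrth B e m

/-- closure under composition with isomorphisms on either side. -/
def ClosedUnderIsoComp (E : MorphismProperty B) : Prop :=
  (∀ ⦃X Y Z : B⦄ (e : X ⟶ Y) (i : Y ⟶ Z), E e → IsIso i → E (e ≫ i)) ∧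
  (∀ ⦃X Y Z : B⦄ (i : X ⟶ Y) (e : Y ⟶ Z), IsIso i → E e → E (i ≫ e))

/-- a commutative square which is a `V`-pullback: it is sent to a pullback square
in `V` by every hom functor `B(A,-)`. -/
def IsVPullbackSq {P X Y Z : B} (p₁ : P ⟶ X) (p₂ : P ⟶ Y) (f : X ⟶ Z) (g : Y ⟶ Z) : Prop :=
  p₁ ≫ f = p₂ ≫ g ∧
    ∀ A : B, IsPullback (eHomWhiskerLeft V A p₁) (eHomWhiskerLeft V A p₂)
      (eHomWhiskerLeft V A f) (eHomWhiskerLeft V A g)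

/-- a commutative square which is a `V`-pushout: it is sent to a pullback square
in `V` by every hom functor `B(-,A)`. -/
def IsVPushoutSq {X Y₁ Y₂ Q : B} (f₁ : X ⟶ Y₁) (f₂ : X ⟶ Y₂) (i₁ : Y₁ ⟶ Q) (i₂ : Y₂ ⟶ Q) :
    Prop :=
  f₁ ≫ i₁ = f₂ ≫ i₂ ∧
    ∀ A : B, IsPullback (eHomWhiskerRight V i₁ A) (eHomWhiskerRight V i₂ A)
      (eHomWhiskerRight V f₁ A) (eHomWhiskerRight V f₂ A)

/-- `B` has `V`-kernel pairs. -/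
def HasVKernelPairs : Prop :=
  ∀ ⦃X Y : B⦄ (f : X ⟶ Y), ∃ (P : B) (p₁ p₂ : P ⟶ X), IsVPullbackSq V B p₁ p₂ f f

/-- `B` has `V`-cokernel pairs. -/
def HasVCokernelPairs : Prop :=
  ∀ ⦃X Y : B⦄ (f : X ⟶ Y), ∃ (Q : B) (i₁ i₂ : Y ⟶ Q), IsVPushoutSq V B f f i₁ i₂

/-- `m : P ⟶ C` is a `V`-fibre-product (`V`-wide-pullback) of the family `f i : X i ⟶ C`,
with projections `π i`. -/
def IsVFibreProduct {ι : Type w} {C : B} {X : ι → B} (f : ∀ i, X i ⟶ C)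
    {P : B} (m : P ⟶ C) (π : ∀ i, P ⟶ X i) : Prop :=
  (∀ i, π i ≫ f i = m) ∧
    ∀ (A : B) (Z : V) (z : Z ⟶ (A ⟶[V] C)) (zi : ∀ i, Z ⟶ (A ⟶[V] X i)),
      (∀ i, zi i ≫ eHomWhiskerLeft V A (f i) = z) →
        ∃! t : Z ⟶ (A ⟶[V] P), t ≫ eHomWhiskerLeft V A m = z ∧
          ∀ i, t ≫ eHomWhiskerLeft V A (π i) = zi i

/-- `m : P ⟶ C` is an ordinary fibre product (wide pullback) of the family `f i : X i ⟶ C`. -/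
def OrdIsFibreProduct {ι : Type w} {C : B} {X : ι → B} (f : ∀ i, X i ⟶ C)
    {P : B} (m : P ⟶ C) (π : ∀ i, P ⟶ X i) : Prop :=
  (∀ i, π i ≫ f i = m) ∧
    ∀ ⦃W' : B⦄ (z : W' ⟶ C) (zi : ∀ i, W' ⟶ X i), (∀ i, zi i ≫ f i = z) →
      ∃! t : W' ⟶ P, t ≫ m = z ∧ ∀ i, t ≫ π i = zi i

/-- a cone is a `V`-limit cone: it is sent to a limit cone in `V` by every `B(A,-)`. -/
def IsVLimitCone {J : Type u₃} [Category.{v₃} J] {D : J ⥤ B} (c : Cone D) : Prop :=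
  ∀ (A : B) (Z : V) (z : ∀ j : J, Z ⟶ (A ⟶[V] D.obj j)),
    (∀ ⦃j j' : J⦄ (φ : j ⟶ j'), z j ≫ eHomWhiskerLeft V A (D.map φ) = z j') →
      ∃! t : Z ⟶ (A ⟶[V] c.pt), ∀ j, t ≫ eHomWhiskerLeft V A (c.π.app j) = z j

/-- a cocone is a `V`-colimit cocone: it is sent to a limit cone in `V` by every `B(-,A)`. -/
def IsVColimitCocone {J : Type u₃} [Category.{v₃} J] {D : J ⥤ B} (c : Cocone D) : Prop :=
  ∀ (A : B) (Z : V) (z : ∀ j : J, Z ⟶ (D.obj j ⟶[V] A)),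
    (∀ ⦃j j' : J⦄ (φ : j ⟶ j'), z j' ≫ eHomWhiskerRight V (D.map φ) A = z j) →
      ∃! t : Z ⟶ (c.pt ⟶[V] A), ∀ j, t ≫ eHomWhiskerRight V (c.ι.app j) A = z j

/-- `B` has small `V`-limits. -/
def HasSmallVLimits : Prop :=
  ∀ (J : Type v₂) [SmallCategory J] (D : J ⥤ B), ∃ c : Cone D, IsVLimitCone V B c

/-- `B` has small `V`-colimits. -/
def HasSmallVColimits : Prop :=
  ∀ (J : Type v₂) [SmallCategory J] (D : J ⥤ B), ∃ c : Cocone D, IsVColimitCocone V B c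

/-- `B` has finite `V`-limits. -/
def HasFiniteVLimits : Prop :=
  ∀ (J : Type) [SmallCategory J] [FinCategory J] (D : J ⥤ B),
    ∃ c : Cone D, IsVLimitCone V B c

/-- `B` is well-powered with respect to the class `M`: every object has,
up to isomorphism, only a set of `M`-subobjects. -/
def WellPoweredWrt (M : MorphismProperty B) : Prop :=
  ∀ X : B, ∃ (ι : Type v₂) (Y : ι → B) (f : ∀ i, Y i ⟶ X), (∀ i, M (f i)) ∧
    ∀ ⦃Z : B⦄ (g : Z ⟶ X), M g → ∃ (i : ι) (h : Z ≅ Y i), h.hom ≫ f i = g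

/-- `B` is co-well-powered with respect to the class `E`. -/
def CoWellPoweredWrt (E : MorphismProperty B) : Prop :=
  ∀ X : B, ∃ (ι : Type v₂) (Y : ι → B) (f : ∀ i, X ⟶ Y i), (∀ i, E (f i)) ∧
    ∀ ⦃Z : B⦄ (g : X ⟶ Z), E g → ∃ (i : ι) (h : Y i ≅ Z), f i ≫ h.hom = g

/-- comparison morphism `B(T, X) ⟶ [v, B(A, X)]` in `V` induced by a
unit `η : v ⟶ B(A, T)`, where `T` is a candidate tensor `v ⊗ A`. -/
def tensorComparison {v : V} {A T : B} (η : v ⟶ (A ⟶[V] T)) (X : B) :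
    (T ⟶[V] X) ⟶ (ihom v).obj (A ⟶[V] X) :=
  MonoidalClosed.curry (eComp V A T X) ≫ (MonoidalClosed.pre η).app (A ⟶[V] X)

/-- `η : v ⟶ B(A,T)` exhibits `T` as a tensor `v ⊗ A` in the enriched sense. -/
def IsTensorUnit (v : V) (A T : B) (η : v ⟶ (A ⟶[V] T)) : Prop :=
  ∀ X : B, IsIso (tensorComparison V B η X)

/-- `B` is tensored over `V`. -/
def Tensored : Prop :=
  ∀ (v : V) (A : B), ∃ (T : B) (η : v ⟶ (A ⟶[V] T)), IsTensorUnit V B v A T η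

/-- `E` is closed under tensors: whenever tensors exist, `v ⊗ e` lies in `E` for `e ∈ E`. -/
def ClosedUnderTensors (E : MorphismProperty B) : Prop :=
  ∀ (v : V) ⦃A₁ A₂ : B⦄ (e : A₁ ⟶ A₂) {T₁ T₂ : B}
    (η₁ : v ⟶ (A₁ ⟶[V] T₁)) (η₂ : v ⟶ (A₂ ⟶[V] T₂)),
    IsTensorUnit V B v A₁ T₁ η₁ → IsTensorUnit V B v A₂ T₂ η₂ → E e →
      ∀ t : T₁ ⟶ T₂, η₁ ≫ eHomWhiskerLeft V A₁ t = η₂ ≫ eHomWhiskerRight V e T₂ → E t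

/-- comparison morphism `B(A, C) ⟶ [v, B(A, X)]` in `V` induced by a
counit `ε : v ⟶ B(C, X)`, where `C` is a candidate cotensor `[v, X]`. -/
def cotensorComparison {v : V} {C X : B} (ε : v ⟶ (C ⟶[V] X)) (A : B) :
    (A ⟶[V] C) ⟶ (ihom v).obj (A ⟶[V] X) :=
  MonoidalClosed.curry ((β_ (C ⟶[V] X) (A ⟶[V] C)).hom ≫ eComp V A C X) ≫
    (MonoidalClosed.pre ε).app (A ⟶[V] X)

/-- `ε : v ⟶ B(C,X)` exhibits `C` as a cotensor `[v, X]` in the enriched sense. -/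
def IsCotensorCounit (v : V) (X C : B) (ε : v ⟶ (C ⟶[V] X)) : Prop :=
  ∀ A : B, IsIso (cotensorComparison V B ε A)

/-- `B` is cotensored over `V`. -/
def Cotensored : Prop :=
  ∀ (v : V) (X : B), ∃ (C : B) (ε : v ⟶ (C ⟶[V] X)), IsCotensorCounit V B v X C ε

/-- `M` is closed under cotensors: `[v, m]` lies in `M` for `m ∈ M`. -/
def ClosedUnderCotensors (M : MorphismProperty B) : Prop :=
  ∀ (v : V) ⦃X₁ X₂ : B⦄ (m : X₁ ⟶ X₂) {C₁ C₂ : B}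
    (ε₁ : v ⟶ (C₁ ⟶[V] X₁)) (ε₂ : v ⟶ (C₂ ⟶[V] X₂)),
    IsCotensorCounit V B v X₁ C₁ ε₁ → IsCotensorCounit V B v X₂ C₂ ε₂ → M m →
      ∀ t : C₁ ⟶ C₂, ε₁ ≫ eHomWhiskerLeft V C₁ m = ε₂ ≫ eHomWhiskerRight V t X₂ → M t

/-- a `V`-functor from a `V`-category `J` to an enriched ordinary category `D`. -/
structure VFunctor (J : Type u₃) [EnrichedCategory V J]
    (D : Type u₄) [Category.{v₄} D] [EnrichedOrdinaryCategory V D] where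
  obj : J → D
  emap : ∀ X Y : J, (X ⟶[V] Y) ⟶ (obj X ⟶[V] obj Y)
  emap_id : ∀ X : J, eId V X ≫ emap X X = eId V (obj X)
  emap_comp : ∀ X Y Z : J,
    eComp V X Y Z ≫ emap X Z = (emap X Y ⊗ₘ emap Y Z) ≫ eComp V (obj X) (obj Y) (obj Z)

/-- the underlying action of a `V`-functor on ordinary morphisms. -/
def VFunctor.map' {J : Type u₃} [Category.{v₃} J] [EnrichedOrdinaryCategory V J]
    {D : Type u₄} [Category.{v₄} D] [EnrichedOrdinaryCategory V D]
    (F : VFunctor V J D) {X Y : J} (f : X ⟶ Y) : F.obj X ⟶ F.obj Y :=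
  (eHomEquiv V).symm (eHomEquiv V f ≫ F.emap X Y)

/-- a `V`-adjunction `F ⊣ G`, given by a `V`-natural isomorphism
`D(F A, X) ≅ A(A, G X)` of hom-objects. -/
structure VAdjunction {A : Type u₃} [Category.{v₃} A] [EnrichedOrdinaryCategory V A]
    {D : Type u₄} [Category.{v₄} D] [EnrichedOrdinaryCategory V D]
    (F : VFunctor V A D) (G : VFunctor V D A) where
  iso : ∀ (X : A) (Y : D), (F.obj X ⟶[V] Y) ≅ (X ⟶[V] G.obj Y)
  nat_right : ∀ (X : A) (Y Y' : D),
    eComp V (F.obj X) Y Y' ≫ (iso X Y').hom =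
      ((iso X Y).hom ⊗ₘ G.emap Y Y') ≫ eComp V X (G.obj Y) (G.obj Y')
  nat_left : ∀ (X X' : A) (Y : D),
    (F.emap X X' ▷ (F.obj X' ⟶[V] Y)) ≫ eComp V (F.obj X) (F.obj X') Y ≫ (iso X Y).hom =
      ((X ⟶[V] X') ◁ (iso X' Y).hom) ≫ eComp V X X' (G.obj Y)

/-- a `V`-functor `J → V` (a weight), presented by its uncurried action. -/
structure VWeight (J : Type u₃) [EnrichedCategory V J] where
  obj : J → V
  act : ∀ j j' : J, obj j ⊗ (j ⟶[V] j') ⟶ obj j'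
  act_id : ∀ j : J, (obj j ◁ eId V j) ≫ act j j = (ρ_ (obj j)).hom
  act_comp : ∀ j j' j'' : J,
    (α_ (obj j) (j ⟶[V] j') (j' ⟶[V] j'')).inv ≫ (act j j' ▷ (j' ⟶[V] j'')) ≫ act j' j'' =
      (obj j ◁ eComp V j j' j'') ≫ act j j''

/-- a `V`-natural transformation between `V`-functors. -/
structure VNatTrans {J : Type u₃} [EnrichedCategory V J]
    {D : Type u₄} [Category.{v₄} D] [EnrichedOrdinaryCategory V D]
    (F G : VFunctor V J D) where
  app : ∀ j : J, F.obj j ⟶ G.obj j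
  naturality : ∀ j j' : J,
    F.emap j j' ≫ eHomWhiskerLeft V (F.obj j) (app j') =
      G.emap j j' ≫ eHomWhiskerRight V (app j) (G.obj j')

/-- `cone` exhibits `L` as the `V`-enriched weighted (indexed) limit `[W, F]`. -/
structure IsWeightedLimit {J : Type u₃} [EnrichedCategory V J]
    {D : Type u₄} [Category.{v₄} D] [EnrichedOrdinaryCategory V D]
    (W : VWeight V J) (F : VFunctor V J D) (L : D)
    (cone : ∀ j : J, W.obj j ⟶ (L ⟶[V] F.obj j)) : Prop where
  natural : ∀ j j' : J,
    W.act j j' ≫ cone j' =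
      (cone j ▷ (j ⟶[V] j')) ≫ ((L ⟶[V] F.obj j) ◁ F.emap j j') ≫
        eComp V L (F.obj j) (F.obj j')
  universal : ∀ (A : D) (Z : V) (μ : ∀ j : J, Z ⊗ W.obj j ⟶ (A ⟶[V] F.obj j)),
    (∀ j j' : J,
      (Z ◁ W.act j j') ≫ μ j' =
        (α_ Z (W.obj j) (j ⟶[V] j')).inv ≫ (μ j ▷ (j ⟶[V] j')) ≫
          ((A ⟶[V] F.obj j) ◁ F.emap j j') ≫ eComp V A (F.obj j) (F.obj j')) →
      ∃! t : Z ⟶ (A ⟶[V] L), ∀ j : J,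
        (t ▷ W.obj j) ≫ ((A ⟶[V] L) ◁ cone j) ≫ eComp V A L (F.obj j) = μ j

/-- `B` is `V`-finitely-well-complete: it has finite `V`-limits and `V`-intersections
of arbitrary class-indexed families of `V`-strong monomorphisms. -/
def VFinitelyWellComplete : Prop :=
  HasFiniteVLimits V B ∧
    ∀ {ι : Type (max u₂ v₂)} {C : B} (X : ι → B) (f : ∀ i, X i ⟶ C),
      (∀ i, vStrongMono V B (f i)) →
        ∃ (P : B) (m : P ⟶ C) (π : ∀ i, P ⟶ X i), IsVFibreProduct V B f m π

/-- `B` is finitely well-complete (ordinary sense): it has finite limits and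
intersections of arbitrary class-indexed families of strong monomorphisms. -/
def OrdFinitelyWellComplete : Prop :=
  HasFiniteLimits B ∧
    ∀ {ι : Type (max u₂ v₂)} {C : B} (X : ι → B) (f : ∀ i, X i ⟶ C),
      (∀ i, ordStrongMono B (f i)) →
        ∃ (P : B) (m : P ⟶ C) (π : ∀ i, P ⟶ X i), OrdIsFibreProduct B f m π

/-! ### Auxiliary lemmas -/

section Aux

set_option linter.unusedSectionVars false

variable {V B}

lemma aux_star1 (A T : B) {X X' : B} (g : X ⟶ X') :
    eComp V A T X ≫ eHomWhiskerLeft V A g =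
      ((A ⟶[V] T) ◁ eHomWhiskerLeft V T g) ≫ eComp V A T X' := by
  dsimp [eHomWhiskerLeft]
  conv_rhs => rw [MonoidalCategory.whiskerLeft_comp_assoc,
    MonoidalCategory.whiskerLeft_comp_assoc, ← e_assoc,
    associator_inv_naturality_right_assoc, whiskerLeft_rightUnitor_inv_assoc,
    Iso.hom_inv_id_assoc, whisker_exchange_assoc, ← rightUnitor_inv_naturality_assoc]

lemma aux_star2 {A₁ A₂ : B} (e : A₁ ⟶ A₂) (T X : B) :
    eComp V A₂ T X ≫ eHomWhiskerRight V e X =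
      (eHomWhiskerRight V e T ▷ (T ⟶[V] X)) ≫ eComp V A₁ T X := by
  dsimp [eHomWhiskerRight]
  conv_rhs => rw [comp_whiskerRight_assoc, comp_whiskerRight_assoc, ← e_assoc',
    associator_naturality_left_assoc, ← leftUnitor_tensor_inv_assoc,
    ← whisker_exchange_assoc, ← leftUnitor_inv_naturality_assoc]

lemma aux_star3 (A : B) {T₁ T₂ : B} (t : T₁ ⟶ T₂) (X : B) :
    (eHomWhiskerLeft V A t ▷ (T₂ ⟶[V] X)) ≫ eComp V A T₂ X =
      ((A ⟶[V] T₁) ◁ eHomWhiskerRight V t X) ≫ eComp V A T₁ X := by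
  dsimp [eHomWhiskerLeft, eHomWhiskerRight]
  conv_lhs => rw [comp_whiskerRight_assoc, comp_whiskerRight_assoc, ← e_assoc',
    associator_naturality_middle_assoc, triangle_assoc_comp_right_inv_assoc]
  conv_rhs => rw [MonoidalCategory.whiskerLeft_comp_assoc,
    MonoidalCategory.whiskerLeft_comp_assoc]

lemma aux_uncurry_tensorComparison {v : V} {A T : B} (η : v ⟶ (A ⟶[V] T)) (X : B) :
    MonoidalClosed.uncurry (tensorComparison V B η X) =
      (η ▷ (T ⟶[V] X)) ≫ eComp V A T X := by
  dsimp [tensorComparison]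
  rw [MonoidalClosed.uncurry_eq, MonoidalCategory.whiskerLeft_comp_assoc,
    ← MonoidalClosed.uncurry_eq, MonoidalClosed.uncurry_pre, whisker_exchange_assoc,
    ← MonoidalClosed.uncurry_eq, MonoidalClosed.uncurry_curry]

lemma aux_uncurry_cotensorComparison {v : V} {C X : B} (ε : v ⟶ (C ⟶[V] X)) (A : B) :
    MonoidalClosed.uncurry (cotensorComparison V B ε A) =
      (ε ▷ (A ⟶[V] C)) ≫ (β_ (C ⟶[V] X) (A ⟶[V] C)).hom ≫ eComp V A C X := by
  dsimp [cotensorComparison]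
  rw [MonoidalClosed.uncurry_eq, MonoidalCategory.whiskerLeft_comp_assoc,
    ← MonoidalClosed.uncurry_eq, MonoidalClosed.uncurry_pre, whisker_exchange_assoc,
    ← MonoidalClosed.uncurry_eq, MonoidalClosed.uncurry_curry]

lemma aux_tensor_phi_eq {v : V} {A T X : B} (η : v ⟶ (A ⟶[V] T)) (t : T ⟶ X) :
    (ρ_ v).inv ≫ MonoidalClosed.uncurry (eHomEquiv V t ≫ tensorComparison V B η X) =
      η ≫ eHomWhiskerLeft V A t := by
  rw [MonoidalClosed.uncurry_natural_left, aux_uncurry_tensorComparison,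
    whisker_exchange_assoc, ← rightUnitor_inv_naturality_assoc]
  rfl

lemma aux_cotensor_psi_eq {v : V} {C X A : B} (ε : v ⟶ (C ⟶[V] X)) (a : A ⟶ C) :
    (ρ_ v).inv ≫ MonoidalClosed.uncurry (eHomEquiv V a ≫ cotensorComparison V B ε A) =
      ε ≫ eHomWhiskerRight V a X := by
  rw [MonoidalClosed.uncurry_natural_left, aux_uncurry_cotensorComparison,
    whisker_exchange_assoc, ← rightUnitor_inv_naturality_assoc,
    BraidedCategory.braiding_naturality_right_assoc]
  have : (ρ_ ((C : B) ⟶[V] X)).inv ≫ (β_ ((C : B) ⟶[V] X) (𝟙_ V)).hom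
      = (λ_ ((C : B) ⟶[V] X)).inv := by
    rw [← cancel_mono (λ_ ((C : B) ⟶[V] X)).hom, Category.assoc, braiding_leftUnitor,
      Iso.inv_hom_id, Iso.inv_hom_id]
  rw [reassoc_of% this]
  rfl

/-- universal property of a tensor unit on underlying hom-sets. -/
lemma aux_tensorUnit_homEquiv {v : V} {A T : B} {η : v ⟶ (A ⟶[V] T)}
    (h : IsTensorUnit V B v A T η) (X : B) (z : v ⟶ (A ⟶[V] X)) :
    ∃! t : T ⟶ X, η ≫ eHomWhiskerLeft V A t = z := by
  have hI := h X
  refine ⟨(eHomEquiv V).symm (MonoidalClosed.curry ((ρ_ v).hom ≫ z) ≫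
    inv (tensorComparison V B η X)), ?_, ?_⟩
  · show η ≫ eHomWhiskerLeft V A _ = z
    rw [← aux_tensor_phi_eq, Equiv.apply_symm_apply, Category.assoc, IsIso.inv_hom_id,
      Category.comp_id, MonoidalClosed.uncurry_curry, Iso.inv_hom_id_assoc]
  · intro t' ht'
    rw [← aux_tensor_phi_eq] at ht'
    apply (eHomEquiv V).injective
    rw [Equiv.apply_symm_apply, IsIso.eq_comp_inv]
    apply MonoidalClosed.uncurry_injective
    rw [MonoidalClosed.uncurry_curry, ← ht', Iso.hom_inv_id_assoc]

/-- universal property of a cotensor counit on underlying hom-sets. -/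
lemma aux_cotensorCounit_homEquiv {v : V} {C X : B} {ε : v ⟶ (C ⟶[V] X)}
    (h : IsCotensorCounit V B v X C ε) (A : B) (z : v ⟶ (A ⟶[V] X)) :
    ∃! a : A ⟶ C, ε ≫ eHomWhiskerRight V a X = z := by
  have hI := h A
  refine ⟨(eHomEquiv V).symm (MonoidalClosed.curry ((ρ_ v).hom ≫ z) ≫
    inv (cotensorComparison V B ε A)), ?_, ?_⟩
  · show ε ≫ eHomWhiskerRight V _ X = z
    rw [← aux_cotensor_psi_eq, Equiv.apply_symm_apply, Category.assoc, IsIso.inv_hom_id,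
      Category.comp_id, MonoidalClosed.uncurry_curry, Iso.inv_hom_id_assoc]
  · intro t' ht'
    rw [← aux_cotensor_psi_eq] at ht'
    apply (eHomEquiv V).injective
    rw [Equiv.apply_symm_apply, IsIso.eq_comp_inv]
    apply MonoidalClosed.uncurry_injective
    rw [MonoidalClosed.uncurry_curry, ← ht', Iso.hom_inv_id_assoc]

lemma aux_tensorComparison_natural {v : V} {A T : B} (η : v ⟶ (A ⟶[V] T)) {X X' : B}
    (g : X ⟶ X') :
    tensorComparison V B η X ≫ (ihom v).map (eHomWhiskerLeft V A g) =
      eHomWhiskerLeft V T g ≫ tensorComparison V B η X' := by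
  apply MonoidalClosed.uncurry_injective
  rw [MonoidalClosed.uncurry_natural_right, MonoidalClosed.uncurry_natural_left,
    aux_uncurry_tensorComparison, aux_uncurry_tensorComparison, Category.assoc,
    aux_star1, whisker_exchange_assoc]

lemma aux_tensorComparison_natural' {v : V} {A₁ A₂ T₁ T₂ : B} (e : A₁ ⟶ A₂)
    (η₁ : v ⟶ (A₁ ⟶[V] T₁)) (η₂ : v ⟶ (A₂ ⟶[V] T₂)) (t : T₁ ⟶ T₂)
    (hcompat : η₁ ≫ eHomWhiskerLeft V A₁ t = η₂ ≫ eHomWhiskerRight V e T₂) (X : B) :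
    tensorComparison V B η₂ X ≫ (ihom v).map (eHomWhiskerRight V e X) =
      eHomWhiskerRight V t X ≫ tensorComparison V B η₁ X := by
  apply MonoidalClosed.uncurry_injective
  rw [MonoidalClosed.uncurry_natural_right, MonoidalClosed.uncurry_natural_left,
    aux_uncurry_tensorComparison, aux_uncurry_tensorComparison, Category.assoc,
    aux_star2, ← comp_whiskerRight_assoc, ← hcompat, comp_whiskerRight_assoc,
    aux_star3, whisker_exchange_assoc]

lemma aux_cotensorComparison_natural {v : V} {C X : B} (ε : v ⟶ (C ⟶[V] X)) {A₁ A₂ : B}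
    (e : A₁ ⟶ A₂) :
    cotensorComparison V B ε A₂ ≫ (ihom v).map (eHomWhiskerRight V e X) =
      eHomWhiskerRight V e C ≫ cotensorComparison V B ε A₁ := by
  apply MonoidalClosed.uncurry_injective
  rw [MonoidalClosed.uncurry_natural_right, MonoidalClosed.uncurry_natural_left,
    aux_uncurry_cotensorComparison, aux_uncurry_cotensorComparison, Category.assoc,
    Category.assoc, aux_star2, ← BraidedCategory.braiding_naturality_right_assoc,
    whisker_exchange_assoc]

lemma aux_cotensorComparison_natural' {v : V} {X₁ X₂ C₁ C₂ : B} (m : X₁ ⟶ X₂)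
    (ε₁ : v ⟶ (C₁ ⟶[V] X₁)) (ε₂ : v ⟶ (C₂ ⟶[V] X₂)) (t : C₁ ⟶ C₂)
    (hcompat : ε₁ ≫ eHomWhiskerLeft V C₁ m = ε₂ ≫ eHomWhiskerRight V t X₂) (A : B) :
    cotensorComparison V B ε₁ A ≫ (ihom v).map (eHomWhiskerLeft V A m) =
      eHomWhiskerLeft V A t ≫ cotensorComparison V B ε₂ A := by
  apply MonoidalClosed.uncurry_injective
  rw [MonoidalClosed.uncurry_natural_right, MonoidalClosed.uncurry_natural_left,
    aux_uncurry_cotensorComparison, aux_uncurry_cotensorComparison, Category.assoc,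
    Category.assoc, aux_star1, ← BraidedCategory.braiding_naturality_left_assoc,
    ← comp_whiskerRight_assoc, hcompat, comp_whiskerRight_assoc,
    whisker_exchange_assoc, BraidedCategory.braiding_naturality_right_assoc,
    aux_star3, BraidedCategory.braiding_naturality_left_assoc]

lemma aux_inv_comm {P Q R S : V} (c₁ : P ⟶ Q) (c₂ : R ⟶ S) [IsIso c₁] [IsIso c₂]
    {f : Q ⟶ S} {g : P ⟶ R} (h : c₁ ≫ f = g ≫ c₂) :
    f ≫ inv c₂ = inv c₁ ≫ g := by
  rw [IsIso.comp_inv_eq, Category.assoc, ← h, IsIso.inv_hom_id_assoc]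

lemma aux_eHomEquiv_comp_left {A X X' : B} (f : A ⟶ X) (g : X ⟶ X') :
    eHomEquiv V (f ≫ g) = eHomEquiv V f ≫ eHomWhiskerLeft V A g := by
  dsimp [eHomWhiskerLeft]
  rw [eHomEquiv_comp, rightUnitor_inv_naturality_assoc, MonoidalCategory.tensorHom_def,
    unitors_inv_equal, Category.assoc]

lemma aux_eHomEquiv_comp_right {A X X' : B} (f : A ⟶ X) (g : X ⟶ X') :
    eHomEquiv V (f ≫ g) = eHomEquiv V g ≫ eHomWhiskerRight V f X' := by
  dsimp [eHomWhiskerRight]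
  rw [eHomEquiv_comp, leftUnitor_inv_naturality_assoc, tensorHom_def',
    Category.assoc, whisker_exchange_assoc]

/-- `V`-orthogonality implies ordinary orthogonality. -/
lemma aux_ordOrth_of_vOrth {A₁ A₂ X₁ X₂ : B} {e : A₁ ⟶ A₂} {m : X₁ ⟶ X₂}
    (h : VOrth V B e m) : OrdOrth B e m := by
  intro u w huw
  have hcone : eHomEquiv V w ≫ eHomWhiskerRight V e X₂ =
      eHomEquiv V u ≫ eHomWhiskerLeft V A₁ m := by
    rw [← aux_eHomEquiv_comp_right, ← aux_eHomEquiv_comp_left, huw]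
  refine ⟨(eHomEquiv V).symm (h.lift (eHomEquiv V w) (eHomEquiv V u) hcone), ⟨?_, ?_⟩, ?_⟩
  · apply (eHomEquiv V).injective
    rw [aux_eHomEquiv_comp_right, Equiv.apply_symm_apply, h.lift_snd]
  · apply (eHomEquiv V).injective
    rw [aux_eHomEquiv_comp_left, Equiv.apply_symm_apply, h.lift_fst]
  · rintro d ⟨hd1, hd2⟩
    apply (eHomEquiv V).injective
    rw [Equiv.apply_symm_apply]
    apply h.hom_ext
    · rw [h.lift_fst, ← aux_eHomEquiv_comp_left, hd2]
    · rw [h.lift_snd, ← aux_eHomEquiv_comp_right, hd1]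

/-- transport of `V`-orthogonality along tensors. -/
lemma aux_vOrth_tensor {v : V} {A₁ A₂ X₁ X₂ T₁ T₂ : B} {e : A₁ ⟶ A₂} {m : X₁ ⟶ X₂}
    {η₁ : v ⟶ (A₁ ⟶[V] T₁)} {η₂ : v ⟶ (A₂ ⟶[V] T₂)}
    (h₁ : IsTensorUnit V B v A₁ T₁ η₁) (h₂ : IsTensorUnit V B v A₂ T₂ η₂)
    (t : T₁ ⟶ T₂) (hcompat : η₁ ≫ eHomWhiskerLeft V A₁ t = η₂ ≫ eHomWhiskerRight V e T₂)
    (he : VOrth V B e m) : VOrth V B t m := by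
  haveI : PreservesLimitsOfSize.{0, 0} (ihom v) :=
    (ihom.adjunction v).rightAdjoint_preservesLimits
  haveI := h₁ X₁; haveI := h₁ X₂; haveI := h₂ X₁; haveI := h₂ X₂
  exact (he.map (ihom v)).of_iso
    (asIso (tensorComparison V B η₂ X₁)).symm
    (asIso (tensorComparison V B η₂ X₂)).symm
    (asIso (tensorComparison V B η₁ X₁)).symm
    (asIso (tensorComparison V B η₁ X₂)).symm
    (aux_inv_comm _ _ (aux_tensorComparison_natural η₂ m))
    (aux_inv_comm _ _ (aux_tensorComparison_natural' e η₁ η₂ t hcompat X₁))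
    (aux_inv_comm _ _ (aux_tensorComparison_natural' e η₁ η₂ t hcompat X₂))
    (aux_inv_comm _ _ (aux_tensorComparison_natural η₁ m))

/-- transport of `V`-orthogonality along cotensors. -/
lemma aux_vOrth_cotensor {v : V} {A₁ A₂ X₁ X₂ C₁ C₂ : B} {e : A₁ ⟶ A₂} {m : X₁ ⟶ X₂}
    {ε₁ : v ⟶ (C₁ ⟶[V] X₁)} {ε₂ : v ⟶ (C₂ ⟶[V] X₂)}
    (h₁ : IsCotensorCounit V B v X₁ C₁ ε₁) (h₂ : IsCotensorCounit V B v X₂ C₂ ε₂)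
    (t : C₁ ⟶ C₂) (hcompat : ε₁ ≫ eHomWhiskerLeft V C₁ m = ε₂ ≫ eHomWhiskerRight V t X₂)
    (he : VOrth V B e m) : VOrth V B e t := by
  haveI : PreservesLimitsOfSize.{0, 0} (ihom v) :=
    (ihom.adjunction v).rightAdjoint_preservesLimits
  haveI := h₁ A₁; haveI := h₁ A₂; haveI := h₂ A₁; haveI := h₂ A₂
  exact (he.map (ihom v)).of_iso
    (asIso (cotensorComparison V B ε₁ A₂)).symm
    (asIso (cotensorComparison V B ε₂ A₂)).symm
    (asIso (cotensorComparison V B ε₁ A₁)).symm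
    (asIso (cotensorComparison V B ε₂ A₁)).symm
    (aux_inv_comm _ _ (aux_cotensorComparison_natural' m ε₁ ε₂ t hcompat A₂))
    (aux_inv_comm _ _ (aux_cotensorComparison_natural ε₁ e))
    (aux_inv_comm _ _ (aux_cotensorComparison_natural ε₂ e))
    (aux_inv_comm _ _ (aux_cotensorComparison_natural' m ε₁ ε₂ t hcompat A₁))

/-- if each tensor of `e` is ordinarily orthogonal to `m`, then `e` is `V`-orthogonal to `m`. -/
lemma aux_vOrth_of_tensor_orth {A₁ A₂ X₁ X₂ : B} (e : A₁ ⟶ A₂) (m : X₁ ⟶ X₂)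
    (h : ∀ Z : V, ∃ (T₁ T₂ : B) (η₁ : Z ⟶ (A₁ ⟶[V] T₁)) (η₂ : Z ⟶ (A₂ ⟶[V] T₂))
      (t : T₁ ⟶ T₂), IsTensorUnit V B Z A₁ T₁ η₁ ∧ IsTensorUnit V B Z A₂ T₂ η₂ ∧
      η₁ ≫ eHomWhiskerLeft V A₁ t = η₂ ≫ eHomWhiskerRight V e T₂ ∧ OrdOrth B t m) :
    VOrth V B e m := by
  have key : ∀ (Z : V) (a : Z ⟶ (A₂ ⟶[V] X₂)) (b : Z ⟶ (A₁ ⟶[V] X₁)),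
      a ≫ eHomWhiskerRight V e X₂ = b ≫ eHomWhiskerLeft V A₁ m →
      ∃! l : Z ⟶ (A₂ ⟶[V] X₁), l ≫ eHomWhiskerLeft V A₂ m = a ∧
        l ≫ eHomWhiskerRight V e X₁ = b := by
    intro Z a b hab
    obtain ⟨T₁, T₂, η₁, η₂, t, h₁, h₂, hcompat, hOrth⟩ := h Z
    obtain ⟨u, hu, -⟩ := aux_tensorUnit_homEquiv h₁ X₁ b
    obtain ⟨w, hw, -⟩ := aux_tensorUnit_homEquiv h₂ X₂ a
    have huw : u ≫ m = t ≫ w := by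
      apply (aux_tensorUnit_homEquiv h₁ X₂ (b ≫ eHomWhiskerLeft V A₁ m)).unique
      · rw [eHomWhiskerLeft_comp, ← Category.assoc, hu]
      · rw [eHomWhiskerLeft_comp, ← Category.assoc, hcompat, Category.assoc,
          ← eHom_whisker_exchange, ← Category.assoc, hw, hab]
    obtain ⟨d, ⟨hd1, hd2⟩, hd3⟩ := hOrth u w huw
    refine ⟨η₂ ≫ eHomWhiskerLeft V A₂ d, ⟨?_, ?_⟩, ?_⟩
    · rw [Category.assoc, ← eHomWhiskerLeft_comp, hd2, hw]
    · rw [Category.assoc, eHom_whisker_exchange, ← Category.assoc, ← hcompat,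
        Category.assoc, ← eHomWhiskerLeft_comp, hd1, hu]
    · intro l' ⟨hl1, hl2⟩
      obtain ⟨d', hd'1, -⟩ := aux_tensorUnit_homEquiv h₂ X₁ l'
      have htd' : t ≫ d' = u := by
        apply (aux_tensorUnit_homEquiv h₁ X₁ b).unique
        · rw [eHomWhiskerLeft_comp, ← Category.assoc, hcompat, Category.assoc,
            ← eHom_whisker_exchange, ← Category.assoc, hd'1, hl2]
        · exact hu
      have hd'm : d' ≫ m = w := by
        apply (aux_tensorUnit_homEquiv h₂ X₂ a).unique
        · rw [eHomWhiskerLeft_comp, ← Category.assoc, hd'1, hl1]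
        · exact hw
      rw [← hd'1, hd3 d' ⟨htd', hd'm⟩]
  exact IsPullback.of_isLimit (PullbackCone.IsLimit.mk (eHom_whisker_exchange V e m)
    (fun s => (key s.pt s.fst s.snd s.condition).choose)
    (fun s => (key s.pt s.fst s.snd s.condition).choose_spec.1.1)
    (fun s => (key s.pt s.fst s.snd s.condition).choose_spec.1.2)
    (fun s l hl1 hl2 => (key s.pt s.fst s.snd s.condition).choose_spec.2 l ⟨hl1, hl2⟩))

/-- if `e` is ordinarily orthogonal to each cotensor of `m`, then `e` is `V`-orthogonal
to `m`. -/
lemma aux_vOrth_of_cotensor_orth {A₁ A₂ X₁ X₂ : B} (e : A₁ ⟶ A₂) (m : X₁ ⟶ X₂)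
    (h : ∀ Z : V, ∃ (C₁ C₂ : B) (ε₁ : Z ⟶ (C₁ ⟶[V] X₁)) (ε₂ : Z ⟶ (C₂ ⟶[V] X₂))
      (t : C₁ ⟶ C₂), IsCotensorCounit V B Z X₁ C₁ ε₁ ∧ IsCotensorCounit V B Z X₂ C₂ ε₂ ∧
      ε₁ ≫ eHomWhiskerLeft V C₁ m = ε₂ ≫ eHomWhiskerRight V t X₂ ∧ OrdOrth B e t) :
    VOrth V B e m := by
  have key : ∀ (Z : V) (a : Z ⟶ (A₂ ⟶[V] X₂)) (b : Z ⟶ (A₁ ⟶[V] X₁)),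
      a ≫ eHomWhiskerRight V e X₂ = b ≫ eHomWhiskerLeft V A₁ m →
      ∃! l : Z ⟶ (A₂ ⟶[V] X₁), l ≫ eHomWhiskerLeft V A₂ m = a ∧
        l ≫ eHomWhiskerRight V e X₁ = b := by
    intro Z a b hab
    obtain ⟨C₁, C₂, ε₁, ε₂, t, h₁, h₂, hcompat, hOrth⟩ := h Z
    obtain ⟨u, hu, -⟩ := aux_cotensorCounit_homEquiv h₁ A₁ b
    obtain ⟨w, hw, -⟩ := aux_cotensorCounit_homEquiv h₂ A₂ a
    have huw : u ≫ t = e ≫ w := by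
      apply (aux_cotensorCounit_homEquiv h₂ A₁ (b ≫ eHomWhiskerLeft V A₁ m)).unique
      · rw [eHomWhiskerRight_comp, ← Category.assoc, ← hcompat, Category.assoc,
          eHom_whisker_exchange, ← Category.assoc, hu]
      · rw [eHomWhiskerRight_comp, ← Category.assoc, hw, hab]
    obtain ⟨d, ⟨hd1, hd2⟩, hd3⟩ := hOrth u w huw
    refine ⟨ε₁ ≫ eHomWhiskerRight V d X₁, ⟨?_, ?_⟩, ?_⟩
    · rw [Category.assoc, ← eHom_whisker_exchange, ← Category.assoc, hcompat,
        Category.assoc, ← eHomWhiskerRight_comp, hd2, hw]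
    · rw [Category.assoc, ← eHomWhiskerRight_comp, hd1, hu]
    · intro l' ⟨hl1, hl2⟩
      obtain ⟨d', hd'1, -⟩ := aux_cotensorCounit_homEquiv h₁ A₂ l'
      have hed' : e ≫ d' = u := by
        apply (aux_cotensorCounit_homEquiv h₁ A₁ b).unique
        · rw [eHomWhiskerRight_comp, ← Category.assoc, hd'1, hl2]
        · exact hu
      have hd't : d' ≫ t = w := by
        apply (aux_cotensorCounit_homEquiv h₂ A₂ a).unique
        · rw [eHomWhiskerRight_comp, ← Category.assoc, ← hcompat, Category.assoc,
            eHom_whisker_exchange, ← Category.assoc, hd'1, hl1]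
        · exact hw
      rw [← hd'1, hd3 d' ⟨hed', hd't⟩]
  exact IsPullback.of_isLimit (PullbackCone.IsLimit.mk (eHom_whisker_exchange V e m)
    (fun s => (key s.pt s.fst s.snd s.condition).choose)
    (fun s => (key s.pt s.fst s.snd s.condition).choose_spec.1.1)
    (fun s => (key s.pt s.fst s.snd s.condition).choose_spec.1.2)
    (fun s l hl1 hl2 => (key s.pt s.fst s.snd s.condition).choose_spec.2 l ⟨hl1, hl2⟩))

end Aux

/-- For tensored and cotensored `B`: `(E,M)` is a `V`-prefactorization system iff it is
an ordinary prefactorization system with `E` closed under tensors and `M` closed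
under cotensors. -/
theorem stmt6 (ht : Tensored V B) (hc : Cotensored V B) (E M : MorphismProperty B) :
    IsVPrefactorization V B E M ↔
      (IsOrdPrefactorization B E M ∧
        ClosedUnderTensors V B E ∧ ClosedUnderCotensors V B M) := by
  have pext : ∀ (P Q : MorphismProperty B), (∀ ⦃X Y : B⦄ (f : X ⟶ Y), P f ↔ Q f) → P = Q := by
    intro P Q h
    funext X Y f
    exact propext (h f)
  constructor
  · rintro ⟨hR, hL⟩
    have hEV : ∀ {A₁ A₂ : B} (e : A₁ ⟶ A₂), E e → ∀ {X₁ X₂ : B} (m : X₁ ⟶ X₂), M m →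
        VOrth V B e m := by
      intro _ _ e he _ _ m hm
      have he' : vLlp V B M e := by rw [hL]; exact he
      exact he' m hm
    have hCT : ClosedUnderTensors V B E := by
      intro v A₁ A₂ e T₁ T₂ η₁ η₂ h₁ h₂ he t hcompat
      rw [← hL]
      intro X₁ X₂ m hm
      exact aux_vOrth_tensor h₁ h₂ t hcompat (hEV e he m hm)
    have hCC : ClosedUnderCotensors V B M := by
      intro v X₁ X₂ m C₁ C₂ ε₁ ε₂ h₁ h₂ hm t hcompat
      rw [← hR]
      intro A₁ A₂ e he
      exact aux_vOrth_cotensor h₁ h₂ t hcompat (hEV e he m hm)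
    refine ⟨⟨?_, ?_⟩, hCT, hCC⟩
    · apply pext
      intro X₁ X₂ m
      constructor
      · intro hm
        rw [← hR]
        intro A₁ A₂ e he
        apply aux_vOrth_of_tensor_orth
        intro Z
        obtain ⟨T₁, η₁, h₁⟩ := ht Z A₁
        obtain ⟨T₂, η₂, h₂⟩ := ht Z A₂
        obtain ⟨t, hcompat, -⟩ :=
          aux_tensorUnit_homEquiv h₁ T₂ (η₂ ≫ eHomWhiskerRight V e T₂)
        exact ⟨T₁, T₂, η₁, η₂, t, h₁, h₂, hcompat,
          hm t (hCT Z e η₁ η₂ h₁ h₂ he t hcompat)⟩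
      · intro hm A₁ A₂ e he
        exact aux_ordOrth_of_vOrth (hEV e he m hm)
    · apply pext
      intro A₁ A₂ e
      constructor
      · intro heL
        rw [← hL]
        intro X₁ X₂ m hm
        apply aux_vOrth_of_cotensor_orth
        intro Z
        obtain ⟨C₁, ε₁, h₁⟩ := hc Z X₁
        obtain ⟨C₂, ε₂, h₂⟩ := hc Z X₂
        obtain ⟨t, hcompat, -⟩ :=
          aux_cotensorCounit_homEquiv h₂ C₁ (ε₁ ≫ eHomWhiskerLeft V C₁ m)
        exact ⟨C₁, C₂, ε₁, ε₂, t, h₁, h₂, hcompat.symm,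
          heL t (hCC Z m ε₁ ε₂ h₁ h₂ hm t hcompat.symm)⟩
      · intro he X₁ X₂ m hm
        exact aux_ordOrth_of_vOrth (hEV e he m hm)
  · rintro ⟨⟨hR, hL⟩, hCT, hCC⟩
    constructor
    · apply pext
      intro X₁ X₂ m
      constructor
      · intro hm
        rw [← hR]
        intro A₁ A₂ e he
        exact aux_ordOrth_of_vOrth (hm e he)
      · intro hm A₁ A₂ e he
        apply aux_vOrth_of_tensor_orth
        intro Z
        obtain ⟨T₁, η₁, h₁⟩ := ht Z A₁
        obtain ⟨T₂, η₂, h₂⟩ := ht Z A₂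
        obtain ⟨t, hcompat, -⟩ :=
          aux_tensorUnit_homEquiv h₁ T₂ (η₂ ≫ eHomWhiskerRight V e T₂)
        have hm' : ordRlp B E m := by rw [hR]; exact hm
        exact ⟨T₁, T₂, η₁, η₂, t, h₁, h₂, hcompat,
          hm' t (hCT Z e η₁ η₂ h₁ h₂ he t hcompat)⟩
    · apply pext
      intro A₁ A₂ e
      constructor
      · intro he
        rw [← hL]
        intro X₁ X₂ m hm
        exact aux_ordOrth_of_vOrth (he m hm)
      · intro he X₁ X₂ m hm
        apply aux_vOrth_of_cotensor_orth
        intro Z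
        obtain ⟨C₁, ε₁, h₁⟩ := hc Z X₁
        obtain ⟨C₂, ε₂, h₂⟩ := hc Z X₂
        obtain ⟨t, hcompat, -⟩ :=
          aux_cotensorCounit_homEquiv h₂ C₁ (ε₁ ≫ eHomWhiskerLeft V C₁ m)
        have he' : ordLlp B M e := by rw [hL]; exact he
        exact ⟨C₁, C₂, ε₁, ε₂, t, h₁, h₂, hcompat.symm,
          he' t (hCC Z m ε₁ ε₂ h₁ h₂ hm t hcompat.symm)⟩

end EnrichedFS
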